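/- Every length-2 factor of f^ω(0) is equivalent under the cyclic shift σ to a factor of the word 07401030502 (the length-11 prefix of f^ω(0)). -/

import Mathlib

/-- The image of 0 under the morphism: 0740103050260. -/
def f0 : List (Fin 8) := [0,7,4,0,1,0,3,0,5,0,2,6,0]

/-- The cyclic shift morphism σ, sending each letter a to a+1 (mod 8). -/
def sigmaW (w : List (Fin 8)) : List (Fin 8) := w.map (· + 1)

/-- The image of a letter under the cyclic morphism f: f(a) = σ^a(f(0)). -/
def fL (a : Fin 8) : List (Fin 8) := f0.map (· + a)

/-- The morphism f extended to words. -/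
def fW (w : List (Fin 8)) : List (Fin 8) := w.flatMap fL

/-- f^n(0). -/
def fIter (n : ℕ) : List (Fin 8) := fW^[n] [0]

/-- u is a factor of the fixed point f^ω(0): since f^n(0) is a prefix of
f^{n+1}(0), this holds iff u is a factor of some f^n(0). -/
def FactorFP (u : List (Fin 8)) : Prop := ∃ n, u <:+: fIter n

/-- A letter of Σ ∪ {ε} viewed as a word. -/
def optL (a : Option (Fin 8)) : List (Fin 8) := a.elim [] (fun x => [x])

/-- The image under f of an element of Σ ∪ {ε}. -/
def imgF (a : Option (Fin 8)) : List (Fin 8) := a.elim [] fL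

def Dset : Finset (Fin 8) := {1,2,3,4,5,7}

lemma splitInfix2 {α : Type*} (a b : α) :
    ∀ (X Y : List α), [a,b] <:+: X ++ Y →
      [a,b] <:+: X ∨ [a,b] <:+: Y ∨ (X.getLast? = some a ∧ Y.head? = some b) := by
  intro X
  induction X with
  | nil => intro Y h; exact Or.inr (Or.inl (by simpa using h))
  | cons x X' ih =>
    intro Y h
    rw [List.cons_append, List.infix_cons_iff] at h
    rcases h with h | h
    · -- [a,b] is a prefix of x :: (X' ++ Y)
      rcases h with ⟨t, ht⟩
      simp only [List.cons_append, List.cons.injEq] at ht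
      obtain ⟨rfl, ht⟩ := ht
      cases X' with
      | nil =>
        cases Y with
        | nil => simp at ht
        | cons y Y' =>
          simp only [List.nil_append, List.cons_append, List.cons.injEq] at ht
          exact Or.inr (Or.inr ⟨by simp, by simp [ht.1]⟩)
      | cons x' X'' =>
        simp only [List.cons_append, List.cons.injEq] at ht
        obtain ⟨rfl, ht⟩ := ht
        refine Or.inl ⟨[], ?_⟩
        exact ⟨X'', by simp⟩
    · rcases ih Y h with h | h | ⟨h1, h2⟩
      · exact Or.inl (h.trans (List.infix_cons_iff.mpr (Or.inr (List.infix_refl _))))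
      · exact Or.inr (Or.inl h)
      · refine Or.inr (Or.inr ⟨?_, h2⟩)
        cases X' with
        | nil => simp at h1
        | cons x' X'' => simpa using h1

lemma pair_f0 : ∀ a b : Fin 8, [a,b] <:+: f0 → b - a ∈ Dset := by decide

lemma pair_fL (a b c : Fin 8) (h : [a,b] <:+: fL c) : b - a ∈ Dset := by
  have h2 := h.map (· - c)
  simp only [fL, List.map_map, List.map_cons, List.map_nil] at h2
  have : ((fun x => x - c) ∘ fun x => x + c) = id := by
    funext x; simp
  rw [this, List.map_id] at h2
  have := pair_f0 _ _ h2
  simpa using this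

lemma step (a b : Fin 8) : ∀ l : List (Fin 8), [a,b] <:+: fW l →
    (∃ c ∈ l, [a,b] <:+: fL c) ∨ [a,b] <:+: l := by
  intro l
  induction l with
  | nil => intro h; simp [fW] at h
  | cons c t ih =>
    intro h
    rw [fW, List.flatMap_cons] at h
    rcases splitInfix2 a b _ _ h with h | h | ⟨h1, h2⟩
    · exact Or.inl ⟨c, by simp, h⟩
    · rcases ih h with ⟨d, hd, hin⟩ | h
      · exact Or.inl ⟨d, List.mem_cons_of_mem _ hd, hin⟩
      · exact Or.inr (h.trans (List.infix_cons_iff.mpr (Or.inr (List.infix_refl _))))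
    · have ha : a = c := by
        simp [fL, f0] at h1; omega
      cases t with
      | nil => simp [fW] at h2
      | cons d t' =>
        have hb : b = d := by
          rw [List.flatMap_cons] at h2
          simp [fL, f0] at h2; omega
        exact Or.inr ⟨[], t', by simp [ha, hb]⟩

lemma invariant : ∀ n (a b : Fin 8), [a,b] <:+: fIter n → b - a ∈ Dset := by
  intro n
  induction n with
  | zero =>
    intro a b h
    have := h.sublist.length_le
    simp [fIter] at this
  | succ n ih =>
    intro a b h
    rw [fIter, Function.iterate_succ_apply'] at h
    rcases step a b _ h with ⟨c, _, hin⟩ | h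
    · exact pair_fL a b c hin
    · exact ih a b h

lemma inPrefix : ∀ d : Fin 8, d ∈ Dset →
    ∃ c : Fin 8, [c, c + d] <:+: ([0,7,4,0,1,0,3,0,5,0,2] : List (Fin 8)) := by
  decide

open Fin.NatCast Fin.CommRing

lemma sigma_iter (i : ℕ) (l : List (Fin 8)) : sigmaW^[i] l = l.map (· + (i : Fin 8)) := by
  induction i with
  | zero => simp
  | succ i ih =>
    rw [Function.iterate_succ_apply', ih, sigmaW, List.map_map]
    congr 1
    funext x
    simp only [Function.comp_apply]
    push_cast
    ring

theorem stmt12 (u : List (Fin 8)) (hfac : FactorFP u) (hlen : u.length = 2) :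
    ∃ v : List (Fin 8), v <:+: [0,7,4,0,1,0,3,0,5,0,2] ∧
      ∃ i : ℕ, u = sigmaW^[i] v := by
  obtain ⟨a, b, rfl⟩ := List.length_eq_two.mp hlen
  obtain ⟨n, hn⟩ := hfac
  have hD := invariant n a b hn
  obtain ⟨c, hc⟩ := inPrefix _ hD
  refine ⟨[c, c + (b - a)], hc, (a - c).val, ?_⟩
  rw [sigma_iter]
  simp only [List.map_cons, List.map_nil, Fin.cast_val_eq_self, List.cons.injEq, and_true]
  constructor <;> ring
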